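/- Let C be a category with exactly three objects v, e, e′ such that: the only endomorphism of each object is its identity, the hom-sets C(v, e) and C(v, e′) each contain exactly two morphisms, and the hom-sets C(e, v), C(e′, v), C(e, e′), C(e′, e) are all empty. Then the set of Grothendieck topologies on C has exactly 8 elements. -/

import Mathlib

open CategoryTheory

universe v u

namespace Stmt11Aux

variable {C : Type u} [Category.{v} C]

/-- The sieve of arrows into `X` whose domain admits no arrow from `X`. -/
def ndSieve (X : C) : Sieve X where
  arrows := fun {Y} _ => IsEmpty (X ⟶ Y)
  downward_closed := fun hf g => ⟨fun h => hf.false (h ≫ g)⟩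

/-- `S` consists exactly of the arrows whose domain differs from `X`. -/
def Qd {X : C} (S : Sieve X) : Prop := ∀ ⦃Y : C⦄ (f : Y ⟶ X), S f ↔ Y ≠ X

theorem botMem (J : GrothendieckTopology C) {X : C} (h : (⊥ : Sieve X) ∈ J X) (S : Sieve X) :
    S ∈ J X :=
  J.transitive h S (fun _ _ hf => (hf : False).elim)

theorem ndSieve_ne_top (X : C) : ndSieve X ≠ ⊤ := fun h =>
  ((Sieve.id_mem_iff_eq_top (S := ndSieve X)).mpr h).false (𝟙 X)

theorem bot_ne_top (X : C) : (⊥ : Sieve X) ≠ ⊤ := fun h =>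
  ((Sieve.id_mem_iff_eq_top (S := (⊥ : Sieve X))).mpr h : False)

theorem qd_nd (vo a b : C) (hall : ∀ x : C, x = vo ∨ x = a ∨ x = b)
    (hAV : IsEmpty (a ⟶ vo)) (hAB : IsEmpty (a ⟶ b)) : Qd (ndSieve a) := by
  intro Y f
  constructor
  · intro hie hYa
    subst Y
    exact hie.false (𝟙 a)
  · intro hYa
    rcases hall Y with h | h | h
    · subst h; exact hAV
    · exact absurd h hYa
    · subst h; exact hAB

theorem eq_nd_of_qd {vo a b : C} (hall : ∀ x : C, x = vo ∨ x = a ∨ x = b)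
    (hAV : IsEmpty (a ⟶ vo)) (hAB : IsEmpty (a ⟶ b)) {S : Sieve a} (hQ : Qd S) :
    S = ndSieve a :=
  Sieve.ext fun _ f => (hQ f).trans ((qd_nd vo a b hall hAV hAB) f).symm

/-- Every sieve on the vertex object is `⊥` or `⊤`. -/
theorem sieve_vo (vo a b : C) (hall : ∀ x : C, x = vo ∨ x = a ∨ x = b)
    (hEndV : ∀ f : vo ⟶ vo, f = 𝟙 vo)
    (hAV : IsEmpty (a ⟶ vo)) (hBV : IsEmpty (b ⟶ vo)) (S : Sieve vo) :
    S = ⊥ ∨ S = ⊤ := by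
  by_cases h : S (𝟙 vo)
  · exact Or.inr (Sieve.id_mem_iff_eq_top.mp h)
  · left
    refine Sieve.ext fun Y f => ⟨fun hf => ?_, fun hf => (hf : False).elim⟩
    rcases hall Y with h1 | h1 | h1
    · subst h1; rw [hEndV f] at hf; exact absurd hf h
    · subst h1; exact (hAV.false f).elim
    · subst h1; exact (hBV.false f).elim

/-- Characterization of the covering sieves on the vertex object. -/
theorem char_vo (J : GrothendieckTopology C) (vo a b : C)
    (hall : ∀ x : C, x = vo ∨ x = a ∨ x = b)
    (hEndV : ∀ f : vo ⟶ vo, f = 𝟙 vo)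
    (hAV : IsEmpty (a ⟶ vo)) (hBV : IsEmpty (b ⟶ vo)) (S : Sieve vo) :
    S ∈ J vo ↔ S = ⊤ ∨ (S = ⊥ ∧ (⊥ : Sieve vo) ∈ J vo) := by
  constructor
  · intro hS
    rcases sieve_vo vo a b hall hEndV hAV hBV S with h | h
    · exact Or.inr ⟨h, h ▸ hS⟩
    · exact Or.inl h
  · rintro (rfl | ⟨rfl, hp⟩)
    · exact J.top_mem vo
    · exact hp

/-- Characterization of the covering sieves on an edge object. -/
theorem char_edge (J : GrothendieckTopology C) (vo a b : C)
    (hva : vo ≠ a)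
    (hall : ∀ x : C, x = vo ∨ x = a ∨ x = b)
    (hEndV : ∀ f : vo ⟶ vo, f = 𝟙 vo)
    (hEndA : ∀ f : a ⟶ a, f = 𝟙 a)
    (hAV : IsEmpty (a ⟶ vo)) (hBV : IsEmpty (b ⟶ vo))
    (hAB : IsEmpty (a ⟶ b)) (hBA : IsEmpty (b ⟶ a))
    (S : Sieve a) :
    S ∈ J a ↔ S = ⊤ ∨ ((Qd S ∨ (⊥ : Sieve vo) ∈ J vo) ∧ ndSieve a ∈ J a) := by
  constructor
  · intro hS
    by_cases hT : S = ⊤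
    · exact Or.inl hT
    right
    have hle : S ≤ ndSieve a := by
      intro Y f hf
      rcases hall Y with h | h | h
      · subst h; exact hAV
      · subst h
        rw [hEndA f] at hf
        exact absurd (Sieve.id_mem_iff_eq_top.mp hf) hT
      · subst h; exact hAB
    refine ⟨?_, J.superset_covering hle hS⟩
    by_cases hp : (⊥ : Sieve vo) ∈ J vo
    · exact Or.inr hp
    left
    intro Y f
    constructor
    · intro hf hYa
      subst hYa
      rw [hEndA f] at hf
      exact hT (Sieve.id_mem_iff_eq_top.mp hf)
    · intro hYa
      rcases hall Y with h | h | h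
      · subst Y
        have hpb := J.pullback_stable f hS
        rcases sieve_vo vo a b hall hEndV hAV hBV (S.pullback f) with hb | ht
        · rw [hb] at hpb; exact absurd hpb hp
        · exact (Sieve.mem_iff_pullback_eq_top f).mpr ht
      · exact absurd h hYa
      · subst h; exact (hBA.false f).elim
  · rintro (rfl | ⟨hq, hnd⟩)
    · exact J.top_mem a
    rcases hq with hQ | hp
    · rw [eq_nd_of_qd hall hAV hAB hQ]; exact hnd
    · refine J.transitive hnd S ?_
      intro Y f hf
      rcases hall Y with h | h | h
      · subst h; exact botMem J hp _
      · subst Y; exact ((hf : IsEmpty (a ⟶ a)).false (𝟙 a)).elim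
      · subst h; exact (hBA.false f).elim

/-- The candidate covering-sieve predicate attached to `(p, q, r)`. -/
def memF (vo e e' : C) (p q r : Prop) (X : C) (S : Sieve X) : Prop :=
  S = ⊤ ∨ (X = vo ∧ p) ∨ (X = e ∧ (Qd S ∨ p) ∧ q) ∨ (X = e' ∧ (Qd S ∨ p) ∧ r)

theorem memF_pullback (vo e e' : C)
    (hdist : vo ≠ e ∧ vo ≠ e' ∧ e ≠ e')
    (hall : ∀ x : C, x = vo ∨ x = e ∨ x = e')
    (hEndE : ∀ f : e ⟶ e, f = 𝟙 e)
    (hEndE' : ∀ f : e' ⟶ e', f = 𝟙 e')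
    (hEV : IsEmpty (e ⟶ vo)) (hE'V : IsEmpty (e' ⟶ vo))
    (hEE' : IsEmpty (e ⟶ e')) (hE'E : IsEmpty (e' ⟶ e))
    (p q r : Prop) :
    ∀ ⦃X Y : C⦄ ⦃S : Sieve X⦄ (f : Y ⟶ X),
      memF vo e e' p q r X S → memF vo e e' p q r Y (S.pullback f) := by
  intro X Y S f hS
  rcases hS with rfl | ⟨rfl, hp⟩ | ⟨rfl, hQp, hq⟩ | ⟨rfl, hQp, hr⟩
  · exact Or.inl Sieve.pullback_top
  · rcases hall Y with h | h | h
    · subst h; exact Or.inr (Or.inl ⟨rfl, hp⟩)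
    · subst h; exact (hEV.false f).elim
    · subst h; exact (hE'V.false f).elim
  · rcases hall Y with h | h | h
    · subst h
      rcases hQp with hQ | hp
      · exact Or.inl ((Sieve.mem_iff_pullback_eq_top f).mp ((hQ f).mpr hdist.1))
      · exact Or.inr (Or.inl ⟨rfl, hp⟩)
    · subst h
      rw [hEndE f, Sieve.pullback_id]
      exact Or.inr (Or.inr (Or.inl ⟨rfl, hQp, hq⟩))
    · subst h; exact (hE'E.false f).elim
  · rcases hall Y with h | h | h
    · subst h
      rcases hQp with hQ | hp
      · exact Or.inl ((Sieve.mem_iff_pullback_eq_top f).mp ((hQ f).mpr hdist.2.1))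
      · exact Or.inr (Or.inl ⟨rfl, hp⟩)
    · subst h; exact (hEE'.false f).elim
    · subst h
      rw [hEndE' f, Sieve.pullback_id]
      exact Or.inr (Or.inr (Or.inr ⟨rfl, hQp, hr⟩))

theorem memF_transitive (vo e e' : C)
    (hdist : vo ≠ e ∧ vo ≠ e' ∧ e ≠ e')
    (hall : ∀ x : C, x = vo ∨ x = e ∨ x = e')
    (hEndE : ∀ f : e ⟶ e, f = 𝟙 e)
    (hEndE' : ∀ f : e' ⟶ e', f = 𝟙 e')
    (hEE' : IsEmpty (e ⟶ e')) (hE'E : IsEmpty (e' ⟶ e))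
    (p q r : Prop) :
    ∀ ⦃X : C⦄ ⦃S : Sieve X⦄, memF vo e e' p q r X S →
      ∀ (R : Sieve X), (∀ ⦃Y⦄ ⦃f : Y ⟶ X⦄, S f → memF vo e e' p q r Y (R.pullback f)) →
      memF vo e e' p q r X R := by
  intro X S hS R h
  rcases hS with rfl | ⟨rfl, hp⟩ | ⟨rfl, hQp, hq⟩ | ⟨rfl, hQp, hr⟩
  · have h0 := h (f := 𝟙 X) trivial
    rwa [Sieve.pullback_id] at h0
  · exact Or.inr (Or.inl ⟨rfl, hp⟩)
  · by_cases hT : R = ⊤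
    · exact Or.inl hT
    by_cases hp : p
    · exact Or.inr (Or.inr (Or.inl ⟨rfl, Or.inr hp, hq⟩))
    rcases hQp with hQ | hp'
    swap
    · exact absurd hp' hp
    refine Or.inr (Or.inr (Or.inl ⟨rfl, Or.inl ?_, hq⟩))
    intro Y f
    constructor
    · intro hf hYe
      subst hYe
      rw [hEndE f] at hf
      exact hT (Sieve.id_mem_iff_eq_top.mp hf)
    · intro hYe
      rcases hall Y with h1 | h1 | h1
      · subst h1
        have hSf : S f := (hQ f).mpr hdist.1
        rcases h hSf with htop | ⟨_, hp'⟩ | ⟨hve, _⟩ | ⟨hve', _⟩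
        · exact (Sieve.mem_iff_pullback_eq_top f).mpr htop
        · exact absurd hp' hp
        · exact absurd hve hdist.1
        · exact absurd hve' hdist.2.1
      · exact absurd h1 hYe
      · subst h1; exact (hE'E.false f).elim
  · by_cases hT : R = ⊤
    · exact Or.inl hT
    by_cases hp : p
    · exact Or.inr (Or.inr (Or.inr ⟨rfl, Or.inr hp, hr⟩))
    rcases hQp with hQ | hp'
    swap
    · exact absurd hp' hp
    refine Or.inr (Or.inr (Or.inr ⟨rfl, Or.inl ?_, hr⟩))
    intro Y f
    constructor
    · intro hf hYe
      subst hYe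
      rw [hEndE' f] at hf
      exact hT (Sieve.id_mem_iff_eq_top.mp hf)
    · intro hYe
      rcases hall Y with h1 | h1 | h1
      · subst h1
        have hSf : S f := (hQ f).mpr hdist.2.1
        rcases h hSf with htop | ⟨_, hp'⟩ | ⟨hve, _⟩ | ⟨hve', _⟩
        · exact (Sieve.mem_iff_pullback_eq_top f).mpr htop
        · exact absurd hp' hp
        · exact absurd hve hdist.1
        · exact absurd hve' hdist.2.1
      · subst h1; exact (hEE'.false f).elim
      · exact absurd h1 hYe

/-- The Grothendieck topology attached to `(p, q, r)`. -/
def mkJ (vo e e' : C)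
    (hdist : vo ≠ e ∧ vo ≠ e' ∧ e ≠ e')
    (hall : ∀ x : C, x = vo ∨ x = e ∨ x = e')
    (hEndE : ∀ f : e ⟶ e, f = 𝟙 e)
    (hEndE' : ∀ f : e' ⟶ e', f = 𝟙 e')
    (hEV : IsEmpty (e ⟶ vo)) (hE'V : IsEmpty (e' ⟶ vo))
    (hEE' : IsEmpty (e ⟶ e')) (hE'E : IsEmpty (e' ⟶ e))
    (p q r : Prop) : GrothendieckTopology C where
  sieves X := {S | memF vo e e' p q r X S}
  top_mem' _ := Or.inl rfl
  pullback_stable' _ _ _ f hS :=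
    memF_pullback vo e e' hdist hall hEndE hEndE' hEV hE'V hEE' hE'E p q r f hS
  transitive' _ _ hS R h :=
    memF_transitive vo e e' hdist hall hEndE hEndE' hEE' hE'E p q r hS R h

end Stmt11Aux

open Stmt11Aux

theorem stmt11 {C : Type u} [Category.{v} C] (vo e e' : C)
    (hdist : vo ≠ e ∧ vo ≠ e' ∧ e ≠ e')
    (hall : ∀ x : C, x = vo ∨ x = e ∨ x = e')
    (hEndV : ∀ f : vo ⟶ vo, f = 𝟙 vo)
    (hEndE : ∀ f : e ⟶ e, f = 𝟙 e)
    (hEndE' : ∀ f : e' ⟶ e', f = 𝟙 e')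
    (hVE : Nat.card (vo ⟶ e) = 2)
    (hVE' : Nat.card (vo ⟶ e') = 2)
    (hEV : IsEmpty (e ⟶ vo)) (hE'V : IsEmpty (e' ⟶ vo))
    (hEE' : IsEmpty (e ⟶ e')) (hE'E : IsEmpty (e' ⟶ e)) :
    Nat.card (GrothendieckTopology C) = 8 := by
  have hall' : ∀ x : C, x = vo ∨ x = e' ∨ x = e := by
    intro x; rcases hall x with h | h | h <;> tauto
  set Φ : GrothendieckTopology C → Prop × Prop × Prop :=
    fun J => ((⊥ : Sieve vo) ∈ J vo, ndSieve e ∈ J e, ndSieve e' ∈ J e') with hΦ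
  have hinj : Function.Injective Φ := by
    intro J J' hEq
    simp only [hΦ, Prod.mk.injEq] at hEq
    obtain ⟨h1, h2, h3⟩ := hEq
    apply GrothendieckTopology.ext
    funext X
    ext S
    rcases hall X with h | h | h
    · subst X
      rw [char_vo J vo e e' hall hEndV hEV hE'V S,
        char_vo J' vo e e' hall hEndV hEV hE'V S, h1]
    · subst X
      rw [char_edge J vo e e' hdist.1 hall hEndV hEndE hEV hE'V hEE' hE'E S,
        char_edge J' vo e e' hdist.1 hall hEndV hEndE hEV hE'V hEE' hE'E S, h1, h2]
    · subst X
      rw [char_edge J vo e' e hdist.2.1 hall' hEndV hEndE' hE'V hEV hE'E hEE' S,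
        char_edge J' vo e' e hdist.2.1 hall' hEndV hEndE' hE'V hEV hE'E hEE' S, h1, h3]
  have hsurj : Function.Surjective Φ := by
    rintro ⟨p, q, r⟩
    refine ⟨mkJ vo e e' hdist hall hEndE hEndE' hEV hE'V hEE' hE'E p q r, ?_⟩
    have hJ : ∀ (X : C) (S : Sieve X),
        (S ∈ mkJ vo e e' hdist hall hEndE hEndE' hEV hE'V hEE' hE'E p q r X) =
          memF vo e e' p q r X S := fun _ _ => rfl
    simp only [hΦ, Prod.mk.injEq, hJ]
    refine ⟨propext ⟨?_, ?_⟩, propext ⟨?_, ?_⟩, propext ⟨?_, ?_⟩⟩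
    · rintro (htop | ⟨_, hp⟩ | ⟨hve, _⟩ | ⟨hve', _⟩)
      · exact absurd htop (bot_ne_top vo)
      · exact hp
      · exact absurd hve hdist.1
      · exact absurd hve' hdist.2.1
    · intro hp; exact Or.inr (Or.inl ⟨rfl, hp⟩)
    · rintro (htop | ⟨hve, _⟩ | ⟨_, _, hq⟩ | ⟨hee', _⟩)
      · exact absurd htop (ndSieve_ne_top e)
      · exact absurd hve.symm hdist.1
      · exact hq
      · exact absurd hee' hdist.2.2
    · intro hq
      exact Or.inr (Or.inr (Or.inl ⟨rfl, Or.inl (qd_nd vo e e' hall hEV hEE'), hq⟩))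
    · rintro (htop | ⟨hve', _⟩ | ⟨hee', _⟩ | ⟨_, _, hr⟩)
      · exact absurd htop (ndSieve_ne_top e')
      · exact absurd hve'.symm hdist.2.1
      · exact absurd hee'.symm hdist.2.2
      · exact hr
    · intro hr
      exact Or.inr (Or.inr (Or.inr ⟨rfl, Or.inl (qd_nd vo e' e hall' hE'V hE'E), hr⟩))
  have hcard : Nat.card (GrothendieckTopology C) = Nat.card (Prop × Prop × Prop) :=
    Nat.card_congr (Equiv.ofBijective Φ ⟨hinj, hsurj⟩)
  have hProp : Nat.card Prop = 2 := by
    rw [Nat.card_congr Equiv.propEquivBool, Nat.card_eq_fintype_card, Fintype.card_bool]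
  rw [hcard, Nat.card_prod, Nat.card_prod, hProp]
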